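/- Let N be a finite ground set, (N, 𝓜) a matroid of rank K, Z a monotone, submodular, normalized set function on N, c ∈ [0,1] a curvature bound for Z, and g a greedy sequence for (Z, 𝓜) with output G and increments ρ_i = ρ_{g_i}(G^{i−1}). Let d ≥ 1 be a real number such that for every i ∈ {1, …, K} with |{x ∈ N ∖ G^{i−1} : G^{i−1} ∪ {x} ∈ 𝓜}| > K − i + 1 (i.e., every iteration i < i_0), and for every x ∈ N ∖ G^{i−1} with x ≠ g_i and G^{i−1} ∪ {x} ∈ 𝓜, one has d·ρ_x(G^{i−1}) ≤ ρ_i (so d is a lower bound on the minimum discriminant d_min). Then for every Ω ∈ 𝓜, max(1, c + 1/d)·Z(G) ≥ Z(Ω); equivalently, Z(G)/Z(Ω) ≥ min(1, 1/(c + 1/d)) whenever Z(Ω) > 0. -/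
import Mathlib


open Finset

/-- Marginal gain of adding `q` to `S`: `ρ_q(S) = Z(S ∪ {q}) − Z(S)`. -/
def marg {α : Type*} [DecidableEq α] (Z : Finset α → ℝ) (q : α) (S : Finset α) : ℝ :=
  Z (insert q S) - Z S

/-- The set `{g 1, …, g i}` of the first `i` elements of the sequence `g`. -/
def initSeg {α : Type*} [DecidableEq α] (g : ℕ → α) (i : ℕ) : Finset α :=
  (Finset.Icc 1 i).image g


lemma gda_initSeg_mono {α : Type*} [DecidableEq α] (g : ℕ → α) {i j : ℕ} (h : i ≤ j) :
    initSeg g i ⊆ initSeg g j :=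
  image_subset_image (Icc_subset_Icc_right h)

lemma gda_initSeg_succ {α : Type*} [DecidableEq α] (g : ℕ → α) {i : ℕ} (h : 1 ≤ i) :
    initSeg g i = insert (g i) (initSeg g (i - 1)) := by
  unfold initSeg
  rw [show Finset.Icc 1 i = insert i (Finset.Icc 1 (i - 1)) by
    ext j; simp only [mem_insert, mem_Icc]; omega, image_insert]

lemma gda_teleG {α : Type*} [DecidableEq α] (Z : Finset α → ℝ) (hZ_empty : Z ∅ = 0)
    (g : ℕ → α) :
    ∀ k, Z (initSeg g k) = ∑ i ∈ Finset.Icc 1 k, marg Z (g i) (initSeg g (i - 1)) := by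
  intro k
  induction k with
  | zero => simp [initSeg, hZ_empty]
  | succ k ih =>
    rw [show Finset.Icc 1 (k + 1) = insert (k + 1) (Finset.Icc 1 k) by
      ext j; simp only [mem_insert, mem_Icc]; omega,
      sum_insert (by simp), ← ih]
    rw [gda_initSeg_succ g (Nat.succ_le_succ (Nat.zero_le k)) (i := k + 1)]
    simp only [Nat.add_sub_cancel, marg]
    ring

/-- Augmentation chain: extend S within S ∪ T to the cardinality of T. -/
lemma gda_extend {α : Type*} [DecidableEq α] (M : Finset α → Prop)
    (hM_aug : ∀ S T : Finset α, M S → M T → S.card < T.card →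
      ∃ x ∈ T \ S, M (insert x S)) :
    ∀ n (S T : Finset α), M S → M T → S.card + n = T.card →
      ∃ S', S ⊆ S' ∧ S' ⊆ S ∪ T ∧ S'.card = T.card ∧ M S' := by
  intro n
  induction n with
  | zero => intro S T hS _ hcard; exact ⟨S, subset_rfl, subset_union_left, by omega, hS⟩
  | succ n ih =>
    intro S T hS hT hcard
    obtain ⟨x, hx, hxM⟩ := hM_aug S T hS hT (by omega)
    rw [mem_sdiff] at hx
    obtain ⟨S', h1, h2, h3, h4⟩ := ih (insert x S) T hxM hT
      (by rw [card_insert_of_notMem hx.2]; omega)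
    refine ⟨S', (subset_insert x S).trans h1, h2.trans ?_, h3, h4⟩
    intro y hy
    rcases mem_union.1 hy with h | h
    · rcases mem_insert.1 h with rfl | h
      · exact mem_union_right _ hx.1
      · exact mem_union_left _ h
    · exact mem_union_right _ h

/-- System of distinct representatives for a nested family. -/
lemma gda_sdr {α : Type*} [DecidableEq α] (a0 : α) :
    ∀ (P : Finset ℕ) (B : ℕ → Finset α),
      (∀ i ∈ P, ∀ j ∈ P, i ≤ j → B j ⊆ B i) →
      (∀ i ∈ P, (P.filter (fun j => i ≤ j)).card ≤ (B i).card) →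
      ∃ σ : ℕ → α, Set.InjOn σ ↑P ∧ ∀ i ∈ P, σ i ∈ B i := by
  intro P
  induction P using Finset.strongInduction with
  | _ P ih =>
    rcases P.eq_empty_or_nonempty with rfl | hne
    · exact fun _ _ _ => ⟨fun _ => a0, by simp, by simp⟩
    intro B hnest hcard
    set m := P.max' hne with hm
    have hmP : m ∈ P := P.max'_mem hne
    have hfilm : P.filter (fun j => m ≤ j) = {m} := by
      ext j
      simp only [mem_filter, mem_singleton]
      constructor
      · rintro ⟨hj, hmj⟩; exact le_antisymm (P.le_max' j hj) hmj |>.symm ▸ rfl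
      · rintro rfl; exact ⟨hmP, le_rfl⟩
    have hBm : (B m).Nonempty := by
      have h := hcard m hmP
      rw [hfilm, card_singleton] at h
      exact card_pos.1 h
    obtain ⟨b, hb⟩ := hBm
    have hsub : P.erase m ⊂ P := erase_ssubset hmP
    obtain ⟨σ, hσinj, hσmem⟩ := ih (P.erase m) hsub (fun j => (B j).erase b)
      (fun i hi j hj hij => erase_subset_erase _
        (hnest i (mem_of_mem_erase hi) j (mem_of_mem_erase hj) hij))
      (by
        intro i hi
        have hiP := mem_of_mem_erase hi
        have him : i ≤ m := P.le_max' i hiP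
        have hbBi : b ∈ B i := hnest i hiP m hmP him hb
        have h1 : (P.erase m).filter (fun j => i ≤ j)
            = ((P.filter (fun j => i ≤ j)).erase m) := by
          ext j; simp only [mem_filter, mem_erase]; tauto
        have h2 : m ∈ P.filter (fun j => i ≤ j) := mem_filter.2 ⟨hmP, him⟩
        rw [h1, card_erase_of_mem h2, card_erase_of_mem hbBi]
        have := hcard i hiP
        have := card_pos.2 ⟨m, h2⟩
        omega)
    refine ⟨fun j => if j = m then b else σ j, ?_, ?_⟩
    · intro x hx y hy hxy
      simp only [Finset.coe_sort_coe, Finset.mem_coe] at hx hy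
      by_cases hxm : x = m <;> by_cases hym : y = m
      · rw [hxm, hym]
      · exfalso
        simp only [hxm, if_pos rfl, if_neg hym] at hxy
        have : σ y ∈ (B y).erase b := hσmem y (mem_erase.2 ⟨hym, hy⟩)
        exact (mem_erase.1 this).1 hxy.symm
      · exfalso
        simp only [hym, if_pos rfl, if_neg hxm] at hxy
        have : σ x ∈ (B x).erase b := hσmem x (mem_erase.2 ⟨hxm, hx⟩)
        exact (mem_erase.1 this).1 hxy
      · simp only [if_neg hxm, if_neg hym] at hxy
        exact hσinj (Finset.mem_coe.mpr (mem_erase.2 ⟨hxm, hx⟩))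
          (Finset.mem_coe.mpr (mem_erase.2 ⟨hym, hy⟩)) hxy
    · intro i hi
      by_cases him : i = m
      · subst him; simpa using hb
      · have : σ i ∈ (B i).erase b := hσmem i (mem_erase.2 ⟨him, hi⟩)
        simpa [him] using (mem_erase.1 this).2

/-- Upper telescoping bound via submodularity. -/
lemma gda_tele_up {α : Type*} [DecidableEq α] (N : Finset α) (Z : Finset α → ℝ)
    (hZ_submod : ∀ S T : Finset α, ∀ x, S ⊆ T → T ⊆ N → x ∈ N → x ∉ T →
      Z (insert x T) - Z T ≤ Z (insert x S) - Z S) :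
    ∀ (W : Finset α), W ⊆ N → ∀ S ⊆ N, (∀ w ∈ W, w ∉ S) →
    Z (S ∪ W) ≤ Z S + ∑ w ∈ W, marg Z w S := by
  intro W
  induction W using Finset.induction_on with
  | empty => intro _ S _ _; simp
  | @insert a W ha ih =>
    intro hWN S hSN hdisj
    have haN : a ∈ N := hWN (mem_insert_self a W)
    have hWN' : W ⊆ N := (subset_insert a W).trans hWN
    have hSWN : S ∪ W ⊆ N := union_subset hSN hWN'
    have haSW : a ∉ S ∪ W := by
      simp only [mem_union]
      push_neg
      exact ⟨hdisj a (mem_insert_self a W), ha⟩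
    have h1 : Z (insert a (S ∪ W)) - Z (S ∪ W) ≤ marg Z a S :=
      hZ_submod S (S ∪ W) a subset_union_left hSWN haN haSW
    have h2 := ih hWN' S hSN (fun w hw => hdisj w (mem_insert_of_mem hw))
    have h3 : S ∪ insert a W = insert a (S ∪ W) := by
      ext x; simp [or_comm, or_assoc, or_left_comm]
    rw [h3, sum_insert ha]
    linarith

/-- Lower telescoping bound via curvature. -/
lemma gda_tele_low {α : Type*} [DecidableEq α] (N : Finset α) (Z : Finset α → ℝ)
    (hZ_mono : ∀ S T : Finset α, S ⊆ T → T ⊆ N → Z S ≤ Z T) (c : ℝ)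
    (hcurv : ∀ S ⊆ N, ∀ j ∈ N, j ∉ S → 0 < marg Z j (∅ : Finset α) →
      (1 - c) * marg Z j (∅ : Finset α) ≤ marg Z j S) :
    ∀ (W : Finset α), W ⊆ N → ∀ S ⊆ N, (∀ w ∈ W, w ∉ S) →
    Z S + (1 - c) * ∑ w ∈ W, marg Z w ∅ ≤ Z (S ∪ W) := by
  intro W
  induction W using Finset.induction_on with
  | empty => intro _ S _ _; simp
  | @insert a W ha ih =>
    intro hWN S hSN hdisj
    have haN : a ∈ N := hWN (mem_insert_self a W)
    have hWN' : W ⊆ N := (subset_insert a W).trans hWN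
    have hSWN : S ∪ W ⊆ N := union_subset hSN hWN'
    have haSW : a ∉ S ∪ W := by
      simp only [mem_union]
      push_neg
      exact ⟨hdisj a (mem_insert_self a W), ha⟩
    have hkey : (1 - c) * marg Z a ∅ ≤ Z (insert a (S ∪ W)) - Z (S ∪ W) := by
      by_cases hpos : 0 < marg Z a ∅
      · exact hcurv (S ∪ W) hSWN a haN haSW hpos
      · have h0 : 0 ≤ marg Z a ∅ := by
          have : Z ∅ ≤ Z (insert a ∅) :=
            hZ_mono ∅ (insert a ∅) (empty_subset _) (by simpa using haN)
          simp only [marg]; linarith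
        have heq : marg Z a ∅ = 0 := le_antisymm (not_lt.1 hpos) h0
        have : Z (S ∪ W) ≤ Z (insert a (S ∪ W)) :=
          hZ_mono _ _ (subset_insert _ _) (insert_subset haN hSWN)
        rw [heq]; linarith
    have h2 := ih hWN' S hSN (fun w hw => hdisj w (mem_insert_of_mem hw))
    have h3 : S ∪ insert a W = insert a (S ∪ W) := by
      ext x; simp [or_comm, or_assoc, or_left_comm]
    rw [h3, sum_insert ha, mul_add]
    linarith

/-- Discriminant-and-curvature guarantee for the greedy algorithm over
a matroid: `Z(Ω) ≤ max(1, c + 1/d)·Z(G)` whenever `d` lower bounds all discriminants at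
iterations `i` with more than `K − i + 1` feasible elements remaining. -/
theorem greedy_discriminant_approx {α : Type*} [DecidableEq α]
    (N : Finset α) (M : Finset α → Prop)
    (hM_ground : ∀ S, M S → S ⊆ N) (hM_empty : M ∅)
    (hM_down : ∀ S T : Finset α, M T → S ⊆ T → M S)
    (hM_aug : ∀ S T : Finset α, M S → M T → S.card < T.card → ∃ x ∈ T \ S, M (insert x S))
    [DecidablePred M]
    (K : ℕ) (hK_le : ∀ S, M S → S.card ≤ K) (hK_ex : ∃ B, M B ∧ B.card = K)
    (Z : Finset α → ℝ)
    (hZ_mono : ∀ S T : Finset α, S ⊆ T → T ⊆ N → Z S ≤ Z T)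
    (hZ_submod : ∀ S T : Finset α, ∀ x, S ⊆ T → T ⊆ N → x ∈ N → x ∉ T →
      Z (insert x T) - Z T ≤ Z (insert x S) - Z S)
    (hZ_empty : Z ∅ = 0)
    (c : ℝ) (hc0 : 0 ≤ c) (hc1 : c ≤ 1)
    (hcurv : ∀ S ⊆ N, ∀ j ∈ N, j ∉ S → 0 < marg Z j (∅ : Finset α) →
      (1 - c) * marg Z j (∅ : Finset α) ≤ marg Z j S)
    (g : ℕ → α) (hg_inj : Set.InjOn g (Set.Icc 1 K)) (hG_M : M (initSeg g K))
    (hg_max : ∀ i ∈ Finset.Icc 1 K, ∀ x ∈ N, x ∉ initSeg g (i - 1) →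
      M (insert x (initSeg g (i - 1))) →
      marg Z x (initSeg g (i - 1)) ≤ marg Z (g i) (initSeg g (i - 1)))
    (d : ℝ) (hd : 1 ≤ d)
    (hdisc : ∀ i ∈ Finset.Icc 1 K,
      K - i + 1 < ((N \ initSeg g (i - 1)).filter
        fun x => M (insert x (initSeg g (i - 1)))).card →
      ∀ x ∈ N, x ∉ initSeg g (i - 1) → x ≠ g i →
      M (insert x (initSeg g (i - 1))) →
      d * marg Z x (initSeg g (i - 1)) ≤ marg Z (g i) (initSeg g (i - 1))) :
    ∀ Ω : Finset α, M Ω → Z Ω ≤ max 1 (c + 1 / d) * Z (initSeg g K) := by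
  classical
  intro Ω hΩ
  have hd0 : (0:ℝ) < d := lt_of_lt_of_le one_pos hd
  have hGN : initSeg g K ⊆ N := hM_ground _ hG_M
  have hZG0 : 0 ≤ Z (initSeg g K) := by
    have := hZ_mono ∅ _ (empty_subset _) hGN
    linarith [hZ_empty.symm.le]
  have hginj : ∀ i j, 1 ≤ i → i ≤ K → 1 ≤ j → j ≤ K → g i = g j → i = j := by
    intro i j h1 h2 h3 h4 h
    exact hg_inj (Set.mem_Icc.2 ⟨h1, h2⟩) (Set.mem_Icc.2 ⟨h3, h4⟩) h
  have hgnot : ∀ i, 1 ≤ i → i ≤ K → g i ∉ initSeg g (i - 1) := by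
    intro i h1 h2 hmem
    simp only [initSeg, mem_image, mem_Icc] at hmem
    obtain ⟨j, ⟨hj1, hj2⟩, hji⟩ := hmem
    have := hginj j i hj1 (by omega) h1 h2 hji
    omega
  have hcardInit : ∀ k, k ≤ K → (initSeg g k).card = k := by
    intro k hk
    have hinj' : Set.InjOn g ↑(Finset.Icc 1 k) := by
      intro x hx y hy hxy
      simp only [coe_Icc, Set.mem_Icc] at hx hy
      exact hginj x y hx.1 (hx.2.trans hk) hy.1 (hy.2.trans hk) hxy
    rw [initSeg, card_image_of_injOn hinj', Nat.card_Icc]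
    omega
  -- extend Ω to a basis Ω'
  obtain ⟨B0, hB0M, hB0card⟩ := hK_ex
  obtain ⟨Ω', hΩΩ', _, hΩ'card, hΩ'M⟩ := gda_extend M hM_aug (K - Ω.card) Ω B0 hΩ hB0M
    (by have := hK_le Ω hΩ; omega)
  rw [hB0card] at hΩ'card
  have hΩ'N : Ω' ⊆ N := hM_ground _ hΩ'M
  set P : Finset ℕ := (Finset.Icc 1 K).filter (fun i => g i ∉ Ω') with hPdef
  set B : ℕ → Finset α :=
    fun i => (Ω'.filter (fun x => M (insert x (initSeg g (i - 1))))) \ initSeg g K with hBdef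
  have hBnest : ∀ i ∈ P, ∀ j ∈ P, i ≤ j → B j ⊆ B i := by
    intro i hi j hj hij
    apply sdiff_subset_sdiff _ subset_rfl
    intro x hx
    simp only [mem_filter] at hx ⊢
    exact ⟨hx.1, hM_down _ _ hx.2 (insert_subset_insert _ (gda_initSeg_mono g (by omega)))⟩
  have hBcard : ∀ i ∈ P, (P.filter (fun j => i ≤ j)).card ≤ (B i).card := by
    intro i hiP
    have hiIcc := (mem_filter.1 hiP).1
    rw [mem_Icc] at hiIcc
    obtain ⟨hi1, hiK⟩ := hiIcc
    have hMi : M (initSeg g (i - 1)) := hM_down _ _ hG_M (gda_initSeg_mono g (by omega))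
    have hci : (initSeg g (i - 1)).card = i - 1 := hcardInit (i - 1) (by omega)
    obtain ⟨S', hsub1, hsub2, hScard, hSM⟩ :=
      gda_extend M hM_aug (K - (i - 1)) (initSeg g (i - 1)) Ω' hMi hΩ'M
        (by rw [hΩ'card, hci]; omega)
    rw [hΩ'card] at hScard
    set D := S' \ initSeg g (i - 1) with hDdef
    have hDcard : D.card = K - (i - 1) := by
      rw [hDdef, card_sdiff_of_subset hsub1, hScard, hci]
    have hDB : D \ initSeg g K ⊆ B i := by
      intro x hx
      simp only [mem_sdiff, hDdef] at hx
      simp only [hBdef, mem_sdiff, mem_filter]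
      refine ⟨⟨?_, ?_⟩, hx.2⟩
      · rcases mem_union.1 (hsub2 hx.1.1) with h | h
        · exact absurd h hx.1.2
        · exact h
      · exact hM_down _ _ hSM (insert_subset hx.1.1 hsub1)
    have hDG : D ∩ initSeg g K ⊆
        Finset.image g ((Finset.Icc i K).filter (fun j => g j ∈ Ω')) := by
      intro x hx
      rw [mem_inter] at hx
      obtain ⟨hxD, hxG⟩ := hx
      simp only [initSeg, mem_image, mem_Icc] at hxG
      obtain ⟨j, ⟨hj1, hjK⟩, rfl⟩ := hxG
      have hxΩ' : g j ∈ Ω' := by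
        rw [hDdef, mem_sdiff] at hxD
        rcases mem_union.1 (hsub2 hxD.1) with h | h
        · exact absurd h hxD.2
        · exact h
      have hji : i ≤ j := by
        by_contra h
        exact (mem_sdiff.1 hxD).2
          (by simp only [initSeg, mem_image, mem_Icc]; exact ⟨j, ⟨hj1, by omega⟩, rfl⟩)
      exact mem_image.2 ⟨j, mem_filter.2 ⟨mem_Icc.2 ⟨hji, hjK⟩, hxΩ'⟩, rfl⟩
    have hsplit : (D \ initSeg g K).card + (D ∩ initSeg g K).card = D.card :=
      card_sdiff_add_card_inter _ _
    have hfiltercards : ((Finset.Icc i K).filter (fun j => g j ∈ Ω')).card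
        + ((Finset.Icc i K).filter (fun j => g j ∉ Ω')).card = K + 1 - i := by
      rw [card_filter_add_card_filter_not, Nat.card_Icc]
    have hPfil : P.filter (fun j => i ≤ j) = (Finset.Icc i K).filter (fun j => g j ∉ Ω') := by
      ext j
      simp only [hPdef, mem_filter, mem_Icc]
      constructor
      · rintro ⟨⟨⟨hj1, hjK⟩, hnot⟩, hij⟩; exact ⟨⟨hij, hjK⟩, hnot⟩
      · rintro ⟨⟨hij, hjK⟩, hnot⟩; exact ⟨⟨⟨by omega, hjK⟩, hnot⟩, hij⟩
    have himgcard := Finset.card_image_le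
      (s := (Finset.Icc i K).filter (fun j => g j ∈ Ω')) (f := g)
    have h1 := card_le_card hDB
    have h2 := card_le_card hDG
    rw [hPfil]
    omega
  obtain ⟨σ, hσinj, hσmem⟩ := gda_sdr (g 0) P B hBnest hBcard
  have hBsub : ∀ i ∈ P, σ i ∈ Ω' \ initSeg g K := by
    intro i hi
    have h := hσmem i hi
    simp only [hBdef, mem_sdiff, mem_filter] at h
    exact mem_sdiff.2 ⟨h.1.1, h.2⟩
  -- cardinality of P equals that of Ω' \ G
  have e1 := Finset.card_filter_add_card_filter_not
    (s := Finset.Icc 1 K) (p := fun j => g j ∈ Ω')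
  rw [Nat.card_Icc] at e1
  have e2 : Ω' ∩ initSeg g K
      = Finset.image g ((Finset.Icc 1 K).filter (fun j => g j ∈ Ω')) := by
    ext x
    simp only [mem_inter, mem_image, mem_filter, mem_Icc, initSeg]
    constructor
    · rintro ⟨hxΩ, j, hj, rfl⟩
      exact ⟨j, ⟨hj, hxΩ⟩, rfl⟩
    · rintro ⟨j, ⟨hj, hjΩ⟩, rfl⟩
      exact ⟨hjΩ, j, hj, rfl⟩
  have e3 : (Finset.image g ((Finset.Icc 1 K).filter (fun j => g j ∈ Ω'))).card
      = ((Finset.Icc 1 K).filter (fun j => g j ∈ Ω')).card := by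
    apply card_image_of_injOn
    intro x hx y hy hxy
    simp only [coe_filter, Set.mem_setOf_eq, mem_Icc] at hx hy
    exact hginj x y hx.1.1 hx.1.2 hy.1.1 hy.1.2 hxy
  have e4 : (Ω' \ initSeg g K).card + (Ω' ∩ initSeg g K).card = K := by
    rw [card_sdiff_add_card_inter, hΩ'card]
  rw [e2, e3] at e4
  have hPcard : P.card = (Ω' \ initSeg g K).card := by
    have : P.card = ((Finset.Icc 1 K).filter (fun j => g j ∉ Ω')).card := rfl
    omega
  have himg : Finset.image σ P = Ω' \ initSeg g K := by
    apply Finset.eq_of_subset_of_card_le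
    · intro x hx
      obtain ⟨i, hi, rfl⟩ := mem_image.1 hx
      exact hBsub i hi
    · rw [card_image_of_injOn hσinj]
      omega
  have hGdiff : initSeg g K \ Ω' = Finset.image g P := by
    ext x
    simp only [mem_sdiff, initSeg, mem_image, mem_Icc, hPdef, mem_filter]
    constructor
    · rintro ⟨⟨j, hj, rfl⟩, hnot⟩
      exact ⟨j, ⟨hj, hnot⟩, rfl⟩
    · rintro ⟨j, ⟨hj, hnot⟩, rfl⟩
      exact ⟨⟨j, hj, rfl⟩, hnot⟩
  have hρ : ∀ i, 1 ≤ i → i ≤ K → 0 ≤ marg Z (g i) (initSeg g (i - 1)) := by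
    intro i h1 h2
    rw [marg, ← gda_initSeg_succ g h1]
    have hiN : initSeg g i ⊆ N := (gda_initSeg_mono g h2).trans hGN
    linarith [hZ_mono (initSeg g (i - 1)) (initSeg g i) (gda_initSeg_mono g (by omega)) hiN]
  -- key per-index bound
  have hkey : ∀ i ∈ P, marg Z (σ i) (initSeg g K)
      ≤ (1 / d) * marg Z (g i) (initSeg g (i - 1)) := by
    intro i hiP
    obtain ⟨hiIcc, hgiΩ'⟩ := mem_filter.1 hiP
    rw [mem_Icc] at hiIcc
    obtain ⟨h1, h2⟩ := hiIcc
    have hw := hσmem i hiP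
    simp only [hBdef, mem_sdiff, mem_filter] at hw
    obtain ⟨⟨hwΩ', hwM⟩, hwG⟩ := hw
    have hwN : σ i ∈ N := hΩ'N hwΩ'
    have hwi1 : σ i ∉ initSeg g (i - 1) := fun h => hwG (gda_initSeg_mono g (by omega) h)
    have hwgi : σ i ≠ g i := by
      intro h
      exact hwG (h ▸ mem_image.2 ⟨i, mem_Icc.2 ⟨h1, h2⟩, rfl⟩)
    have hsubF : insert (σ i) (Finset.image g (Finset.Icc i K)) ⊆
        (N \ initSeg g (i - 1)).filter (fun x => M (insert x (initSeg g (i - 1)))) := by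
      intro x hx
      rcases mem_insert.1 hx with rfl | hx
      · exact mem_filter.2 ⟨mem_sdiff.2 ⟨hwN, hwi1⟩, hwM⟩
      · obtain ⟨j, hj, rfl⟩ := mem_image.1 hx
        rw [mem_Icc] at hj
        have hgjG : g j ∈ initSeg g K := mem_image.2 ⟨j, mem_Icc.2 ⟨by omega, hj.2⟩, rfl⟩
        refine mem_filter.2 ⟨mem_sdiff.2 ⟨hGN hgjG, ?_⟩, ?_⟩
        · intro hmem
          simp only [initSeg, mem_image, mem_Icc] at hmem
          obtain ⟨j', hj', hj'e⟩ := hmem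
          have := hginj j' j hj'.1 (by omega) (by omega) hj.2 hj'e
          omega
        · exact hM_down _ _ hG_M (insert_subset hgjG (gda_initSeg_mono g (by omega)))
    have hciK : (Finset.image g (Finset.Icc i K)).card = K + 1 - i := by
      rw [card_image_of_injOn, Nat.card_Icc]
      intro x hx y hy hxy
      simp only [coe_Icc, Set.mem_Icc] at hx hy
      exact hginj x y (by omega) hx.2 (by omega) hy.2 hxy
    have hnotmem : σ i ∉ Finset.image g (Finset.Icc i K) := by
      intro h
      obtain ⟨j, hj, hje⟩ := mem_image.1 h
      rw [mem_Icc] at hj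
      exact hwG (hje ▸ mem_image.2 ⟨j, mem_Icc.2 ⟨by omega, hj.2⟩, rfl⟩)
    have hcardF : K - i + 1 < ((N \ initSeg g (i - 1)).filter
        (fun x => M (insert x (initSeg g (i - 1))))).card := by
      have := card_le_card hsubF
      rw [card_insert_of_notMem hnotmem, hciK] at this
      omega
    have hdd := hdisc i (mem_Icc.2 ⟨h1, h2⟩) hcardF (σ i) hwN hwi1 hwgi hwM
    have hsm : marg Z (σ i) (initSeg g K) ≤ marg Z (σ i) (initSeg g (i - 1)) := by
      have := hZ_submod (initSeg g (i - 1)) (initSeg g K) (σ i)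
        (gda_initSeg_mono g (by omega)) hGN hwN hwG
      simpa [marg] using this
    have h5 : (1 / d) * (d * marg Z (σ i) (initSeg g (i - 1)))
        = marg Z (σ i) (initSeg g (i - 1)) := by
      field_simp
    have h6 := mul_le_mul_of_nonneg_left hdd (le_of_lt (one_div_pos.2 hd0))
    linarith
  -- sums
  have hσinj' : ∀ x ∈ P, ∀ y ∈ P, σ x = σ y → x = y :=
    fun x hx y hy h => hσinj (mem_coe.2 hx) (mem_coe.2 hy) h
  have hginjP : ∀ x ∈ P, ∀ y ∈ P, g x = g y → x = y := by
    intro x hx y hy h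
    have hx' := mem_Icc.1 (mem_filter.1 hx).1
    have hy' := mem_Icc.1 (mem_filter.1 hy).1
    exact hginj x y hx'.1 hx'.2 hy'.1 hy'.2 h
  have hsum1 : ∑ w ∈ Ω' \ initSeg g K, marg Z w (initSeg g K)
      ≤ (1 / d) * ∑ i ∈ P, marg Z (g i) (initSeg g (i - 1)) := by
    rw [← himg, sum_image hσinj', mul_sum]
    exact sum_le_sum hkey
  have hsum2 : ∑ i ∈ P, marg Z (g i) (initSeg g (i - 1))
      ≤ ∑ w ∈ initSeg g K \ Ω', marg Z w ∅ := by
    rw [hGdiff, sum_image hginjP]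
    apply sum_le_sum
    intro i hiP
    have hi' := mem_Icc.1 (mem_filter.1 hiP).1
    have hgiN : g i ∈ N := hGN (mem_image.2 ⟨i, mem_Icc.2 hi', rfl⟩)
    have hsubN : initSeg g (i - 1) ⊆ N := (gda_initSeg_mono g (by omega)).trans hGN
    have := hZ_submod ∅ (initSeg g (i - 1)) (g i) (empty_subset _) hsubN hgiN
      (hgnot i hi'.1 hi'.2)
    simpa [marg] using this
  have hup := gda_tele_up N Z hZ_submod (Ω' \ initSeg g K)
    (sdiff_subset.trans hΩ'N) (initSeg g K) hGN (fun w hw => (mem_sdiff.1 hw).2)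
  have hlow := gda_tele_low N Z hZ_mono c hcurv (initSeg g K \ Ω')
    (sdiff_subset.trans hGN) Ω' hΩ'N (fun w hw => (mem_sdiff.1 hw).2)
  have hu1 : initSeg g K ∪ (Ω' \ initSeg g K) = Ω' ∪ (initSeg g K \ Ω') := by
    rw [union_sdiff_self_eq_union, union_sdiff_self_eq_union, union_comm]
  rw [hu1] at hup
  have hA : Z Ω ≤ Z Ω' := hZ_mono Ω Ω' hΩΩ' hΩ'N
  set SP := ∑ i ∈ P, marg Z (g i) (initSeg g (i - 1)) with hSPdef
  have hSP0 : 0 ≤ SP := by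
    apply sum_nonneg
    intro i hiP
    have hi' := mem_Icc.1 (mem_filter.1 hiP).1
    exact hρ i hi'.1 hi'.2
  have hSPle : SP ≤ Z (initSeg g K) := by
    rw [gda_teleG Z hZ_empty g K]
    apply sum_le_sum_of_subset_of_nonneg (filter_subset _ _)
    intro i hi _
    have hi' := mem_Icc.1 hi
    exact hρ i hi'.1 hi'.2
  have hc' : (1 - c) * SP ≤ (1 - c) * ∑ w ∈ initSeg g K \ Ω', marg Z w ∅ :=
    mul_le_mul_of_nonneg_left hsum2 (by linarith)
  have hmain : Z Ω ≤ Z (initSeg g K) + (1 / d) * SP - (1 - c) * SP := by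
    linarith
  rcases le_or_gt (c + 1 / d) 1 with hcd | hcd
  · rw [max_eq_left hcd, one_mul]
    nlinarith [mul_nonneg (show (0:ℝ) ≤ 1 - c - 1 / d by linarith) hSP0]
  · rw [max_eq_right hcd.le]
    nlinarith [mul_nonneg (show (0:ℝ) ≤ c + 1 / d - 1 by linarith)
      (sub_nonneg.2 hSPle)]
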